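/- No nonzero vector of S = T^⊥ is a product vector; that is, S is a completely entangled subspace. -/

import Mathlib

open Finset

/-- `S = Tᗮ` is completely entangled: it contains no nonzero product vector. -/
theorem stmt_2 (k : ℕ) (hk : 2 ≤ k) (d : Fin k → ℕ) (hd : ∀ r, 2 ≤ d r)
    (u : ℕ → EuclideanSpace ℂ (∀ r, Fin (d r)))
    (hu : ∀ n, u n = ∑ i ∈ Finset.univ.filter
        (fun i : ∀ r, Fin (d r) => ∑ r, (i r : ℕ) = n),
      EuclideanSpace.single i (1 : ℂ)) :
    ∀ v ∈ (Submodule.span ℂ (u '' Set.Iic (∑ r, (d r - 1))))ᗮ, v ≠ 0 →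
      ¬ ∃ x : ∀ r, Fin (d r) → ℂ, ∀ i : ∀ r, Fin (d r), v i = ∏ r, x r (i r) := by
  intro v hv hvne hex
  obtain ⟨x, hx⟩ := hex
  set N := ∑ r, (d r - 1) with hN
  -- Step 1: sums of v over slices vanish
  have hslice : ∀ n ≤ N, ∑ i ∈ Finset.univ.filter
      (fun i : ∀ r, Fin (d r) => ∑ r, (i r : ℕ) = n), v i = 0 := by
    intro n hn
    have hmem : u n ∈ Submodule.span ℂ (u '' Set.Iic N) :=
      Submodule.subset_span ⟨n, hn, rfl⟩
    have := (Submodule.mem_orthogonal _ v).1 hv (u n) hmem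
    rw [hu n, sum_inner] at this
    simpa [EuclideanSpace.inner_single_left] using this
  -- power series
  set c : ∀ r : Fin k, ℕ → ℂ := fun r m => if h : m < d r then x r ⟨m, h⟩ else 0 with hc
  set f : Fin k → PowerSeries ℂ := fun r => PowerSeries.mk (c r) with hf
  have hdpos : ∀ r, 0 < d r := fun r => by have := hd r; omega
  -- coefficient formula
  have hcoeff : ∀ n, PowerSeries.coeff n (∏ r, f r)
      = ∑ i ∈ Finset.univ.filter
        (fun i : ∀ r, Fin (d r) => ∑ r, (i r : ℕ) = n), v i := by
    intro n
    rw [PowerSeries.coeff_prod]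
    have h1 : ∑ l ∈ finsuppAntidiag Finset.univ n, ∏ r, PowerSeries.coeff (l r) (f r)
        = ∑ l ∈ (finsuppAntidiag Finset.univ n).filter (fun l => ∀ r, l r < d r),
          ∏ r, PowerSeries.coeff (l r) (f r) := by
      refine (Finset.sum_filter_of_ne ?_).symm
      intro l hl hne
      by_contra hcon
      push_neg at hcon
      obtain ⟨r, hr⟩ := hcon
      refine hne (Finset.prod_eq_zero (mem_univ r) ?_)
      simp only [hf, hc, PowerSeries.coeff_mk]
      rw [dif_neg (Nat.not_lt.2 hr)]
    rw [h1]
    refine Finset.sum_nbij' (i := fun l => fun r => (⟨l r % d r, Nat.mod_lt _ (hdpos r)⟩ : Fin (d r)))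
      (j := fun i => Finsupp.equivFunOnFinite.symm (fun r => (i r : ℕ))) ?_ ?_ ?_ ?_ ?_
    · intro l hl
      simp only [mem_filter, mem_finsuppAntidiag, mem_univ, true_and] at hl ⊢
      obtain ⟨⟨hsum, -⟩, hlt⟩ := hl
      calc ∑ r, (l r % d r) = ∑ r, l r := by
            refine Finset.sum_congr rfl fun r _ => Nat.mod_eq_of_lt (hlt r)
        _ = n := hsum
    · intro i hi
      simp only [mem_filter, mem_finsuppAntidiag] at hi ⊢
      refine ⟨⟨?_, fun a _ => mem_univ a⟩, fun r => by simp⟩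
      simpa using hi
    · intro l hl
      simp only [mem_filter, mem_finsuppAntidiag] at hl
      ext r
      simp [Nat.mod_eq_of_lt (hl.2 r)]
    · intro i hi
      funext r
      exact Fin.ext (by simp [Nat.mod_eq_of_lt (i r).isLt])
    · intro l hl
      simp only [mem_filter, mem_finsuppAntidiag] at hl
      rw [hx]
      refine Finset.prod_congr rfl fun r _ => ?_
      simp [hf, hc, dif_pos (hl.2 r), Nat.mod_eq_of_lt (hl.2 r)]
  -- coefficients all vanish
  have hPzero : (∏ r, f r) = 0 := by
    ext n
    rw [hcoeff n, map_zero]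
    by_cases hn : n ≤ N
    · exact hslice n hn
    · rw [Finset.sum_eq_zero]
      intro i hi
      exfalso
      simp only [mem_filter, mem_univ, true_and] at hi
      apply hn
      rw [← hi, hN]
      exact Finset.sum_le_sum fun r _ => Nat.le_sub_one_of_lt (i r).isLt
  -- some factor is zero
  obtain ⟨r, -, hr⟩ := Finset.prod_eq_zero_iff.1 hPzero
  have hxr : ∀ j : Fin (d r), x r j = 0 := by
    intro j
    have := congrArg (PowerSeries.coeff j) hr
    simpa [hf, hc, dif_pos j.isLt] using this
  apply hvne
  ext i
  rw [hx i]
  show _ = (0 : ℂ)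
  exact Finset.prod_eq_zero (mem_univ r) (hxr (i r))
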